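/- For every k ∈ ℤ and b ∈ ℝ^d, the wavelet ψ_{k,b} has two vanishing moments: ∫_{ℝ^d} ψ_{k,b}(x) dx = 0 and ∫_{ℝ^d} x ψ_{k,b}(x) dx = 0 (the latter as a vector-valued integral in ℝ^d). -/

import Mathlib

open MeasureTheory

/-- The rectifier (ReLU) function. -/
noncomputable def rect (x : ℝ) : ℝ := max 0 x

/-- The trapezoid function `t`: equal to 2 on [-1,1], vanishing outside (-3,3), linear between. -/
noncomputable def trap (x : ℝ) : ℝ := rect (x + 3) - rect (x + 1) - rect (x - 1) + rect (x - 3)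

/-- The scaling ("father") function `φ(x) = C_d · rect(Σ_j t(x_j) − 2(d−1))` on `ℝ^d`. -/
noncomputable def scalingFn (d : ℕ) (Cd : ℝ) (x : EuclideanSpace ℝ (Fin d)) : ℝ :=
  Cd * rect ((∑ j, trap (x j)) - 2 * ((d : ℝ) - 1))

/-- The ("mother") wavelet `ψ(x) = φ(x) − 2⁻¹ φ(2^{−1/d} x)`. -/
noncomputable def psiFn (d : ℕ) (Cd : ℝ) (x : EuclideanSpace ℝ (Fin d)) : ℝ :=
  scalingFn d Cd x - 2⁻¹ * scalingFn d Cd (((2 : ℝ) ^ (-(1 : ℝ) / d)) • x)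

/-- The wavelet term `ψ_{k,b}(x) = 2^{k/2} ψ(2^{k/d}(x − b))`. -/
noncomputable def psikb (d : ℕ) (Cd : ℝ) (k : ℤ) (b x : EuclideanSpace ℝ (Fin d)) : ℝ :=
  (2 : ℝ) ^ ((k : ℝ) / 2) * psiFn d Cd (((2 : ℝ) ^ ((k : ℝ) / d)) • (x - b))

lemma rect_neg (a : ℝ) : rect (-a) = rect a - a := by
  simp only [rect, max_def]; split_ifs <;> linarith

lemma trap_nonneg (x : ℝ) : 0 ≤ trap x := by
  simp only [trap, rect, max_def]; split_ifs <;> linarith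

lemma trap_le_two (x : ℝ) : trap x ≤ 2 := by
  simp only [trap, rect, max_def]; split_ifs <;> linarith

lemma trap_neg (x : ℝ) : trap (-x) = trap x := by
  simp only [trap]
  rw [show -x + 3 = -(x - 3) by ring, show -x + 1 = -(x - 1) by ring,
    show -x - 1 = -(x + 1) by ring, show -x - 3 = -(x + 3) by ring,
    rect_neg, rect_neg, rect_neg, rect_neg]
  ring

lemma trap_eq_zero {x : ℝ} (h : 3 ≤ |x|) : trap x = 0 := by
  rcases le_abs.mp h with h' | h' <;>
  · simp only [trap, rect, max_def]; split_ifs <;> linarith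

lemma continuous_trap : Continuous trap := by
  unfold trap rect; fun_prop

lemma continuous_scalingFn (d : ℕ) (Cd : ℝ) : Continuous (scalingFn d Cd) := by
  unfold scalingFn rect
  apply Continuous.mul continuous_const
  apply Continuous.max continuous_const
  apply Continuous.sub _ continuous_const
  exact continuous_finset_sum _ fun j _ =>
    continuous_trap.comp (EuclideanSpace.proj j).continuous

lemma scalingFn_compactSupport (d : ℕ) (Cd : ℝ) : HasCompactSupport (scalingFn d Cd) := by
  apply HasCompactSupport.intro (isCompact_closedBall (0 : EuclideanSpace ℝ (Fin d)) (3 * Real.sqrt d))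
  intro x hx
  simp only [Metric.mem_closedBall, dist_zero_right, not_le] at hx
  -- x has some coordinate with |x j| > 3 would give trap = 0; show sum ≤ 2(d-1) if some |x j| ≥ 3
  by_contra hne
  have hbd : ∀ j, |x j| < 3 := by
    intro j
    by_contra hj
    push_neg at hj
    have hsum : (∑ i, trap (x i)) ≤ 2 * ((d : ℝ) - 1) := by
      have h1 : (∑ i, trap (x i)) = ∑ i ∈ Finset.univ.erase j, trap (x i) := by
        rw [← Finset.sum_erase_add _ _ (Finset.mem_univ j), trap_eq_zero hj, add_zero]
      rw [h1]
      calc ∑ i ∈ Finset.univ.erase j, trap (x i) ≤ ∑ i ∈ Finset.univ.erase j, 2 :=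
            Finset.sum_le_sum fun i _ => trap_le_two _
        _ = 2 * ((d : ℝ) - 1) := by
            rw [Finset.sum_const]
            have hd : 1 ≤ d := Nat.one_le_iff_ne_zero.mpr (by rintro rfl; exact (Fin.elim0 j))
            rw [Finset.card_erase_of_mem (Finset.mem_univ j)]
            simp [Finset.card_univ]
            rw [Nat.cast_sub hd]
            push_cast; ring
    have : scalingFn d Cd x = 0 := by
      simp only [scalingFn, rect]
      rw [max_eq_left (by linarith)]
      ring
    exact hne this
  -- now ‖x‖ ≤ 3 √ d
  have : ‖x‖ ≤ 3 * Real.sqrt d := by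
    rw [EuclideanSpace.norm_eq]
    have h1 : (∑ j, ‖x j‖ ^ 2) ≤ ∑ j : Fin d, (9 : ℝ) := by
      apply Finset.sum_le_sum
      intro j _
      have h2 := (hbd j).le
      rw [Real.norm_eq_abs]
      nlinarith [abs_nonneg (x j), (abs_le.mp h2).1, (abs_le.mp h2).2]
    calc Real.sqrt (∑ j, ‖x j‖ ^ 2) ≤ Real.sqrt (∑ j : Fin d, (9:ℝ)) := Real.sqrt_le_sqrt h1
      _ = 3 * Real.sqrt d := by
          rw [Finset.sum_const, Finset.card_univ, Fintype.card_fin]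
          rw [show ((d : ℕ) • (9:ℝ)) = 3^2 * d by simp; ring]
          rw [Real.sqrt_mul (by positivity), Real.sqrt_sq (by norm_num)]
  linarith

lemma scalingFn_neg (d : ℕ) (Cd : ℝ) (x : EuclideanSpace ℝ (Fin d)) :
    scalingFn d Cd (-x) = scalingFn d Cd x := by
  simp only [scalingFn]
  have h : (∑ j, trap ((-x) j)) = ∑ j, trap (x j) :=
    Finset.sum_congr rfl fun j _ => by rw [show (-x) j = -(x j) from rfl, trap_neg]
  rw [h]

section Moments
variable (d : ℕ) (Cd : ℝ)

local notation "E" => EuclideanSpace ℝ (Fin d)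

-- first moment of φ vanishes by symmetry
lemma scalingFn_firstMoment : ∫ x : E, scalingFn d Cd x • x = 0 := by
  have h := integral_neg_eq_self (fun x : E => scalingFn d Cd x • x) volume
  have h2 : ∫ x : E, scalingFn d Cd (-x) • (-x) = - ∫ x : E, scalingFn d Cd x • x := by
    simp_rw [scalingFn_neg, smul_neg]
    exact integral_neg _
  rw [h2] at h
  have h3 : (2:ℝ) • (∫ x : E, scalingFn d Cd x • x) = 0 := by
    rw [two_smul]; nth_rewrite 1 [← h]; simp
  rcases smul_eq_zero.mp h3 with h4 | h4
  · norm_num at h4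
  · exact h4

lemma rpow_pow_eq (a : ℝ) (hd : 1 ≤ d) : ((2:ℝ) ^ (a / d)) ^ d = (2:ℝ) ^ a := by
  have hd0 : (d:ℝ) ≠ 0 := Nat.cast_ne_zero.mpr (by omega)
  rw [← Real.rpow_natCast ((2:ℝ) ^ (a / (d:ℝ))) d, ← Real.rpow_mul (by norm_num)]
  rw [div_mul_cancel₀ _ hd0]

lemma integral_comp_smul_moment (f : EuclideanSpace ℝ (Fin d) → ℝ) (a : ℝ) (ha : a ≠ 0) :
    ∫ x : E, f (a • x) • x = |((a : ℝ) ^ d)⁻¹| • a⁻¹ • ∫ x : E, f x • x := by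
  have key : ∀ x : E, f (a • x) • x = a⁻¹ • f (a • x) • a • x := by
    intro x
    rw [smul_smul, smul_smul]
    congr 1
    field_simp
  calc ∫ x : E, f (a • x) • x = ∫ x : E, a⁻¹ • f (a • x) • a • x := by simp_rw [key]
    _ = |(a ^ Module.finrank ℝ (EuclideanSpace ℝ (Fin d)))⁻¹| • ∫ x : E, a⁻¹ • f x • x :=
        Measure.integral_comp_smul volume (fun y : E => a⁻¹ • f y • y) a
    _ = |((a : ℝ) ^ d)⁻¹| • a⁻¹ • ∫ x : E, f x • x := by
        rw [integral_smul, finrank_euclideanSpace_fin]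

lemma hcs_comp_smul (g : EuclideanSpace ℝ (Fin d) → ℝ) (hg : HasCompactSupport g)
    {c : ℝ} (hc : c ≠ 0) : HasCompactSupport (fun x : E => g (c • x)) :=
  hg.comp_homeomorph (Homeomorph.smulOfNeZero c hc)

lemma two_rpow_ne_zero (a : ℝ) : (2:ℝ) ^ a ≠ 0 := by positivity

lemma continuous_psiFn : Continuous (psiFn d Cd) := by
  unfold psiFn
  exact (continuous_scalingFn d Cd).sub (continuous_const.mul
    ((continuous_scalingFn d Cd).comp (continuous_const_smul _)))

lemma psiFn_compactSupport : HasCompactSupport (psiFn d Cd) := by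
  unfold psiFn
  simp_rw [sub_eq_add_neg]
  exact (scalingFn_compactSupport d Cd).add
    ((hcs_comp_smul d _ (scalingFn_compactSupport d Cd) (two_rpow_ne_zero _)).mul_left).neg

lemma abs_inv_half_pow (hd : 1 ≤ d) : |(((2:ℝ) ^ (-(1:ℝ) / d)) ^ d)⁻¹| = 2 := by
  rw [rpow_pow_eq d (-(1:ℝ)) hd, Real.rpow_neg_one]
  norm_num

-- zeroth moment of ψ
lemma psiFn_int (hd : 1 ≤ d) : ∫ x : E, psiFn d Cd x = 0 := by
  have intφ : Integrable (scalingFn d Cd) (volume : Measure E) :=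
    (continuous_scalingFn d Cd).integrable_of_hasCompactSupport (scalingFn_compactSupport d Cd)
  set c : ℝ := (2:ℝ) ^ (-(1:ℝ) / d) with hc
  have intc : Integrable (fun x : E => scalingFn d Cd (c • x)) volume :=
    ((continuous_scalingFn d Cd).comp (continuous_const_smul _)).integrable_of_hasCompactSupport
      (hcs_comp_smul d _ (scalingFn_compactSupport d Cd) (two_rpow_ne_zero _))
  have hsplit : ∫ x : E, psiFn d Cd x
      = (∫ x : E, scalingFn d Cd x) - 2⁻¹ * ∫ x : E, scalingFn d Cd (c • x) := by
    unfold psiFn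
    rw [integral_sub intφ (intc.const_mul _), integral_const_mul]
  have hscale : ∫ x : E, scalingFn d Cd (c • x)
      = (2:ℝ) * ∫ x : E, scalingFn d Cd x := by
    have := Measure.integral_comp_smul (volume : Measure E) (scalingFn d Cd) c
    rw [finrank_euclideanSpace_fin, abs_inv_half_pow d hd] at this
    simpa using this
  rw [hsplit, hscale]
  ring

-- first moment of ψ
lemma psiFn_moment (hd : 1 ≤ d) : ∫ x : E, psiFn d Cd x • x = 0 := by
  set c : ℝ := (2:ℝ) ^ (-(1:ℝ) / d) with hc
  have int1 : Integrable (fun x : E => scalingFn d Cd x • x) volume :=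
    ((continuous_scalingFn d Cd).smul continuous_id).integrable_of_hasCompactSupport
      ((scalingFn_compactSupport d Cd).smul_right)
  have int2 : Integrable (fun x : E => (2⁻¹ * scalingFn d Cd (c • x)) • x) volume := by
    apply Continuous.integrable_of_hasCompactSupport
    · exact (continuous_const.mul ((continuous_scalingFn d Cd).comp
        (continuous_const_smul _))).smul continuous_id
    · exact ((hcs_comp_smul d _ (scalingFn_compactSupport d Cd)
        (two_rpow_ne_zero _)).mul_left).smul_right
  have hsplit : ∫ x : E, psiFn d Cd x • x
      = (∫ x : E, scalingFn d Cd x • x) - ∫ x : E, (2⁻¹ * scalingFn d Cd (c • x)) • x := by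
    unfold psiFn
    rw [← integral_sub int1 int2]
    congr 1
    funext x
    rw [sub_smul]
  have h2 : ∫ x : E, (2⁻¹ * scalingFn d Cd (c • x)) • x = 0 := by
    have : ∀ x : E, (2⁻¹ * scalingFn d Cd (c • x)) • x
        = (2:ℝ)⁻¹ • (scalingFn d Cd (c • x) • x) := by
      intro x; rw [smul_smul]
    simp_rw [this]
    rw [integral_smul, integral_comp_smul_moment d (scalingFn d Cd) c (two_rpow_ne_zero _),
      scalingFn_firstMoment]
    simp
  rw [hsplit, h2, scalingFn_firstMoment]
  simp

end Moments

/-- each wavelet `ψ_{k,b}` has two vanishing moments. -/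
theorem statement6 (d : ℕ) (hd : 1 ≤ d) (Cd : ℝ) (hCd : 0 < Cd)
    (hnorm : ∫ x : EuclideanSpace ℝ (Fin d), scalingFn d Cd x = 1)
    (k : ℤ) (b : EuclideanSpace ℝ (Fin d)) :
    (∫ x : EuclideanSpace ℝ (Fin d), psikb d Cd k b x = 0) ∧
    (∫ x : EuclideanSpace ℝ (Fin d), psikb d Cd k b x • x = (0 : EuclideanSpace ℝ (Fin d))) := by
  set a : ℝ := (2:ℝ) ^ ((k:ℝ)/d) with ha
  have hane : a ≠ 0 := two_rpow_ne_zero _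
  constructor
  · unfold psikb
    rw [integral_const_mul]
    have h1 : ∫ x : EuclideanSpace ℝ (Fin d), psiFn d Cd (a • (x - b))
        = ∫ y : EuclideanSpace ℝ (Fin d), psiFn d Cd (a • y) :=
      integral_sub_right_eq_self (fun y => psiFn d Cd (a • y)) b
    rw [h1, Measure.integral_comp_smul volume (psiFn d Cd) a, psiFn_int d Cd hd]
    simp
  · unfold psikb
    have hsm : ∀ x : EuclideanSpace ℝ (Fin d),
        ((2:ℝ) ^ ((k:ℝ)/2) * psiFn d Cd (a • (x - b))) • x
        = (2:ℝ) ^ ((k:ℝ)/2) • (psiFn d Cd (a • (x - b)) • x) := fun x => by rw [smul_smul]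
    simp_rw [← ha, hsm]
    rw [integral_smul]
    have key : ∀ x : EuclideanSpace ℝ (Fin d), psiFn d Cd (a • (x - b)) • x
        = (fun z : EuclideanSpace ℝ (Fin d) => psiFn d Cd (a • z) • (z + b)) (x - b) := by
      intro x; simp
    simp_rw [key]
    rw [integral_sub_right_eq_self
      (fun z : EuclideanSpace ℝ (Fin d) => psiFn d Cd (a • z) • (z + b)) b]
    have int1 : Integrable (fun z : EuclideanSpace ℝ (Fin d) => psiFn d Cd (a • z) • z) volume :=
      (((continuous_psiFn d Cd).comp (continuous_const_smul a)).smul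
        continuous_id).integrable_of_hasCompactSupport
        ((hcs_comp_smul d _ (psiFn_compactSupport d Cd) hane).smul_right)
    have int2 : Integrable (fun z : EuclideanSpace ℝ (Fin d) => psiFn d Cd (a • z) • b) volume :=
      (((continuous_psiFn d Cd).comp (continuous_const_smul a)).smul
        continuous_const).integrable_of_hasCompactSupport
        ((hcs_comp_smul d _ (psiFn_compactSupport d Cd) hane).smul_right)
    have hsum : ∫ z : EuclideanSpace ℝ (Fin d), psiFn d Cd (a • z) • (z + b)
        = (∫ z : EuclideanSpace ℝ (Fin d), psiFn d Cd (a • z) • z)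
          + ∫ z : EuclideanSpace ℝ (Fin d), psiFn d Cd (a • z) • b := by
      rw [← integral_add int1 int2]
      simp_rw [smul_add]
    rw [hsum]
    have m1 : ∫ z : EuclideanSpace ℝ (Fin d), psiFn d Cd (a • z) • z = 0 := by
      rw [integral_comp_smul_moment d (psiFn d Cd) a hane, psiFn_moment d Cd hd]
      simp
    have m2 : ∫ z : EuclideanSpace ℝ (Fin d), psiFn d Cd (a • z) • b = 0 := by
      rw [integral_smul_const, Measure.integral_comp_smul volume (psiFn d Cd) a,
        psiFn_int d Cd hd]
      simp
    rw [m1, m2]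
    simp
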